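/- Let a = -√3/2, b = √3/2, and let Q = S₁ ∘ T₂ + S₂ ∘ T₃ for arbitrary real polynomials S₁, S₂. Then ∫_a^b T₆(x)^i Q'(x) dx = 0 for all i ≥ 0. -/

import Mathlib

open Polynomial intervalIntegral

/-- Every real polynomial has a polynomial antiderivative. -/
lemma exists_antideriv (p : Polynomial ℝ) : ∃ q : Polynomial ℝ, q.derivative = p := by
  induction p using Polynomial.induction_on' with
  | add f g hf hg =>
    obtain ⟨qf, hqf⟩ := hf
    obtain ⟨qg, hqg⟩ := hg
    exact ⟨qf + qg, by simp [hqf, hqg]⟩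
  | monomial n a =>
    refine ⟨Polynomial.C (a / (n + 1)) * Polynomial.X ^ (n + 1), ?_⟩
    have h : a / ((n : ℝ) + 1) * ((n : ℝ) + 1) = a :=
      div_mul_cancel₀ a (by positivity)
    rw [Polynomial.derivative_C_mul, Polynomial.derivative_X_pow, ← mul_assoc,
      ← Polynomial.C_mul, Nat.add_sub_cancel]
    push_cast
    rw [h, Polynomial.C_mul_X_pow_eq_monomial]

theorem T6_zero_space_moments_vanish (S₁ S₂ : Polynomial ℝ) :
    ∀ i : ℕ,
      ∫ x in (-(Real.sqrt 3 / 2))..(Real.sqrt 3 / 2),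
        ((Polynomial.Chebyshev.T ℝ 6).eval x) ^ i *
          (Polynomial.derivative
            (S₁.comp (Polynomial.Chebyshev.T ℝ 2) +
              S₂.comp (Polynomial.Chebyshev.T ℝ 3))).eval x = 0 := by
  intro i
  obtain ⟨G₁, hG₁⟩ := exists_antideriv (Polynomial.Chebyshev.T ℝ 3 ^ i * S₁.derivative)
  obtain ⟨G₂, hG₂⟩ := exists_antideriv (Polynomial.Chebyshev.T ℝ 2 ^ i * S₂.derivative)
  set R : Polynomial ℝ :=
    G₁.comp (Polynomial.Chebyshev.T ℝ 2) + G₂.comp (Polynomial.Chebyshev.T ℝ 3) with hR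
  have hT6a : (Polynomial.Chebyshev.T ℝ 6)
      = (Polynomial.Chebyshev.T ℝ 3).comp (Polynomial.Chebyshev.T ℝ 2) := by
    rw [show (6 : ℤ) = 3 * 2 by norm_num, Polynomial.Chebyshev.T_mul]
  have hT6b : (Polynomial.Chebyshev.T ℝ 6)
      = (Polynomial.Chebyshev.T ℝ 2).comp (Polynomial.Chebyshev.T ℝ 3) := by
    rw [show (6 : ℤ) = 2 * 3 by norm_num, Polynomial.Chebyshev.T_mul]
  have hRderiv : R.derivative =
      (Polynomial.Chebyshev.T ℝ 6) ^ i *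
        Polynomial.derivative (S₁.comp (Polynomial.Chebyshev.T ℝ 2) +
          S₂.comp (Polynomial.Chebyshev.T ℝ 3)) := by
    simp only [hR, Polynomial.derivative_add, Polynomial.derivative_comp, hG₁, hG₂,
      Polynomial.mul_comp, Polynomial.pow_comp]
    rw [← hT6a, ← hT6b]
    ring
  have key : ∀ x : ℝ,
      ((Polynomial.Chebyshev.T ℝ 6).eval x) ^ i *
        (Polynomial.derivative (S₁.comp (Polynomial.Chebyshev.T ℝ 2) +
          S₂.comp (Polynomial.Chebyshev.T ℝ 3))).eval x
      = deriv (fun y => R.eval y) x := by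
    intro x
    rw [Polynomial.deriv, ← Polynomial.eval_pow, ← Polynomial.eval_mul, hRderiv]
  simp only [key]
  have hderiv_eq : (deriv fun y => R.eval y) = fun x => R.derivative.eval x :=
    funext fun x => R.deriv
  rw [intervalIntegral.integral_deriv_eq_sub (fun x _ => R.differentiableAt)
      (by rw [hderiv_eq]; exact (R.derivative.continuous).intervalIntegrable _ _)]
  have h3 : (Real.sqrt 3) ^ 2 = 3 := Real.sq_sqrt (by norm_num)
  have hT2 : (Polynomial.Chebyshev.T ℝ 2).eval (Real.sqrt 3 / 2)
      = (Polynomial.Chebyshev.T ℝ 2).eval (-(Real.sqrt 3 / 2)) := by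
    simp [Polynomial.Chebyshev.T_two]
  have e3 : Polynomial.Chebyshev.T ℝ 3
      = 2 * Polynomial.X * (2 * Polynomial.X ^ 2 - 1) - Polynomial.X := by
    have h := Polynomial.Chebyshev.T_add_two ℝ 1
    norm_num at h
    rw [h, Polynomial.Chebyshev.T_two]
  have hT3 : (Polynomial.Chebyshev.T ℝ 3).eval (Real.sqrt 3 / 2)
      = (Polynomial.Chebyshev.T ℝ 3).eval (-(Real.sqrt 3 / 2)) := by
    rw [e3]
    simp only [Polynomial.eval_sub, Polynomial.eval_mul, Polynomial.eval_pow,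
      Polynomial.eval_ofNat, Polynomial.eval_X, Polynomial.eval_one]
    linear_combination (Real.sqrt 3) * h3
  simp only [hR, Polynomial.eval_add, Polynomial.eval_comp, hT2, hT3, sub_self]
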